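/- Let R be a finite set and for each v ∈ R let f_v : 𝒳 → ℝ take values in [0,1] and be monotone nonincreasing and DR-supermodular. Then the function x ↦ ∏_{v∈R} f_v(x) is nonnegative, monotone nonincreasing, and DR-supermodular. -/

import Mathlib

/-- `x` lies in the lattice `𝒳`: each coordinate is a nonnegative integer multiple of `δ`. -/
def InLattice {d : ℕ} (δ : ℝ) (x : Fin d → ℝ) : Prop := ∀ i, ∃ n : ℕ, x i = n * δ

/-- The `i`-th standard unit vector of `ℝ^d`. -/
def eVec {d : ℕ} (i : Fin d) : Fin d → ℝ := Pi.single i 1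

lemma InLattice.add_step {d : ℕ} {δ : ℝ} {x : Fin d → ℝ} (hx : InLattice δ x) (i : Fin d) :
    InLattice δ (x + δ • eVec i) := by
  intro j
  obtain ⟨n, hn⟩ := hx j
  by_cases h : j = i
  · subst h
    exact ⟨n + 1, by simp [eVec, hn]; ring⟩
  · exact ⟨n, by simp [eVec, Pi.single_eq_of_ne h, hn]⟩

lemma le_add_step {d : ℕ} {δ : ℝ} (hδ : 0 < δ) (x : Fin d → ℝ) (i : Fin d) :
    x ≤ x + δ • eVec i := by
  intro j
  by_cases h : j = i
  · subst h; simp [eVec, hδ.le]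
  · simp [eVec, Pi.single_eq_of_ne h]

lemma add_step_le {d : ℕ} {δ : ℝ} {x y : Fin d → ℝ} (hxy : x ≤ y) (i : Fin d) :
    x + δ • eVec i ≤ y + δ • eVec i := fun j => by
  simp only [Pi.add_apply]
  exact add_le_add_left (hxy j) _

theorem finprod_nonincreasing_DRsupermodular {d : ℕ} (hd : 1 ≤ d) (δ : ℝ) (hδ : 0 < δ)
    {V : Type*} (R : Finset V) (f : V → (Fin d → ℝ) → ℝ)
    (hrange : ∀ v ∈ R, ∀ x, InLattice δ x → f v x ∈ Set.Icc (0 : ℝ) 1)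
    (hanti : ∀ v ∈ R, ∀ x y, InLattice δ x → InLattice δ y → x ≤ y → f v y ≤ f v x)
    (hsuper : ∀ v ∈ R, ∀ x y, InLattice δ x → InLattice δ y → x ≤ y → ∀ i : Fin d,
      f v (x + δ • eVec i) - f v x ≤ f v (y + δ • eVec i) - f v y) :
    (∀ x, InLattice δ x → 0 ≤ ∏ v ∈ R, f v x) ∧
    (∀ x y, InLattice δ x → InLattice δ y → x ≤ y →
      (∏ v ∈ R, f v y) ≤ ∏ v ∈ R, f v x) ∧
    (∀ x y, InLattice δ x → InLattice δ y → x ≤ y → ∀ i : Fin d,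
      (∏ v ∈ R, f v (x + δ • eVec i)) - (∏ v ∈ R, f v x) ≤
      (∏ v ∈ R, f v (y + δ • eVec i)) - (∏ v ∈ R, f v y)) := by
  induction R using Finset.cons_induction with
  | empty => simp
  | cons a s ha ih =>
    have hmem : ∀ v ∈ s, v ∈ Finset.cons a s ha := fun v hv => Finset.mem_cons_of_mem hv
    obtain ⟨g0, gA, gS⟩ := ih (fun v hv => hrange v (hmem v hv))
      (fun v hv => hanti v (hmem v hv)) (fun v hv => hsuper v (hmem v hv))
    have haR : a ∈ Finset.cons a s ha := Finset.mem_cons_self a s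
    refine ⟨?_, ?_, ?_⟩
    · intro x hx
      rw [Finset.prod_cons]
      exact mul_nonneg (hrange a haR x hx).1 (g0 x hx)
    · intro x y hx hy hxy
      rw [Finset.prod_cons, Finset.prod_cons]
      exact mul_le_mul (hanti a haR x y hx hy hxy) (gA x y hx hy hxy) (g0 y hy)
        (hrange a haR x hx).1
    · intro x y hx hy hxy i
      rw [Finset.prod_cons, Finset.prod_cons, Finset.prod_cons, Finset.prod_cons]
      have hx' := hx.add_step i
      have hy' := hy.add_step i
      have h1 : f a (y + δ • eVec i) ≤ f a (x + δ • eVec i) :=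
        hanti a haR _ _ hx' hy' (add_step_le hxy i)
      have h2 : (0:ℝ) ≤ f a (y + δ • eVec i) := (hrange a haR _ hy').1
      have h3 : (∏ v ∈ s, f v (x + δ • eVec i)) - ∏ v ∈ s, f v x ≤
          (∏ v ∈ s, f v (y + δ • eVec i)) - ∏ v ∈ s, f v y := gS x y hx hy hxy i
      have h4 : (∏ v ∈ s, f v (y + δ • eVec i)) ≤ ∏ v ∈ s, f v y :=
        gA y _ hy hy' (le_add_step hδ y i)
      have h5 : (∏ v ∈ s, f v y) ≤ ∏ v ∈ s, f v x := gA x y hx hy hxy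
      have h6 : (0:ℝ) ≤ ∏ v ∈ s, f v y := g0 y hy
      have h7 : f a (x + δ • eVec i) - f a x ≤ f a (y + δ • eVec i) - f a y :=
        hsuper a haR x y hx hy hxy i
      have h8 : f a (y + δ • eVec i) ≤ f a y := hanti a haR y _ hy hy' (le_add_step hδ y i)
      nlinarith [mul_nonneg h2 h6]
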